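/- For all integers s ≥ t ≥ 2, no set of two vertices of the grid graph P_s □ P_t is an outer multiset resolving set; consequently dim_ms(P_s □ P_t) ≥ 3. -/

import Mathlib

open SimpleGraph

/-- The multiset representation of `u` with respect to `S`: the multiset of
distances from `u` to the vertices of `S`, counted with multiplicity. -/
noncomputable def mrep {V : Type*} (G : SimpleGraph V) (u : V) (S : Finset V) : Multiset ℕ :=
  S.val.map fun w => G.dist u w

/-- `S` is an outer multiset resolving set of `G`: the multiset representations of
the vertices outside `S` are pairwise distinct. -/
def IsOMR {V : Type*} (G : SimpleGraph V) (S : Finset V) : Prop :=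
  ∀ u ∉ S, ∀ v ∉ S, mrep G u S = mrep G v S → u = v

/-- The outer multiset dimension of `G`. -/
noncomputable def dimMS {V : Type*} (G : SimpleGraph V) [Fintype V] : ℕ :=
  sInf {n | ∃ S : Finset V, S.card = n ∧ IsOMR G S}

/-- The diameter of `G`: the largest distance between vertices of `G`. -/
noncomputable def gdiam {V : Type*} (G : SimpleGraph V) [Fintype V] : ℕ :=
  Finset.univ.sup fun p : V × V => G.dist p.1 p.2

lemma pathGraph_walk_aux {n : ℕ} : ∀ (d : ℕ) (i j : Fin n), i.val + d = j.val →
    ∃ w : (pathGraph n).Walk i j, w.length = d := by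
  intro d
  induction d with
  | zero =>
    intro i j h
    have hij : i = j := Fin.ext (by omega)
    subst hij
    exact ⟨Walk.nil, rfl⟩
  | succ d ih =>
    intro i j h
    have hi1 : i.val + 1 < n := by omega
    obtain ⟨w, hw⟩ := ih ⟨i.val + 1, hi1⟩ j (by simp; omega)
    exact ⟨Walk.cons (pathGraph_adj.mpr (Or.inl rfl)) w, by simp [hw]⟩

lemma pathGraph_walk_exists {n : ℕ} (i j : Fin n) :
    ∃ w : (pathGraph n).Walk i j, w.length = Nat.dist i.val j.val := by
  rcases le_total i.val j.val with h | h
  · obtain ⟨w, hw⟩ := pathGraph_walk_aux (j.val - i.val) i j (by omega)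
    exact ⟨w, by rw [hw]; simp [Nat.dist]; omega⟩
  · obtain ⟨w, hw⟩ := pathGraph_walk_aux (i.val - j.val) j i (by omega)
    exact ⟨w.reverse, by rw [Walk.length_reverse, hw]; simp [Nat.dist]; omega⟩

lemma grid_pot_le {s t : ℕ} (b : Fin s × Fin t) :
    ∀ {x : Fin s × Fin t} (w : ((pathGraph s).boxProd (pathGraph t)).Walk x b),
      Nat.dist x.1.val b.1.val + Nat.dist x.2.val b.2.val ≤ w.length := by
  intro x w
  induction w with
  | nil => simp [Nat.dist]
  | @cons x y _ h w ih =>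
    rcases boxProd_adj.mp h with ⟨h1, h2⟩ | ⟨h1, h2⟩
    · rcases pathGraph_adj.mp h1 with h3 | h3 <;>
        · simp only [Walk.length_cons]
          have := congrArg Fin.val h2
          simp [Nat.dist] at ih ⊢
          omega
    · rcases pathGraph_adj.mp h1 with h3 | h3 <;>
        · simp only [Walk.length_cons]
          have := congrArg Fin.val h2
          simp [Nat.dist] at ih ⊢
          omega

lemma grid_dist {s t : ℕ} (a b : Fin s × Fin t) :
    ((pathGraph s).boxProd (pathGraph t)).dist a b
      = Nat.dist a.1.val b.1.val + Nat.dist a.2.val b.2.val := by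
  obtain ⟨w1, h1⟩ := pathGraph_walk_exists a.1 b.1
  obtain ⟨w2, h2⟩ := pathGraph_walk_exists a.2 b.2
  let wk : ((pathGraph s).boxProd (pathGraph t)).Walk a b :=
    ((w1.boxProdLeft (pathGraph t) a.2).append (w2.boxProdRight (pathGraph s) b.1)).copy
      (Prod.mk.eta) (Prod.mk.eta)
  have hlen : wk.length = Nat.dist a.1.val b.1.val + Nat.dist a.2.val b.2.val := by
    simp only [wk, Walk.length_copy, Walk.length_append, Walk.boxProdLeft, Walk.boxProdRight,
      Walk.length_map, h1, h2]
    exact (Walk.length_append _ _).trans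
      (congrArg₂ (· + ·) ((Walk.length_map _ w1).trans h1) ((Walk.length_map _ w2).trans h2))
  refine le_antisymm (hlen ▸ dist_le wk) ?_
  obtain ⟨w, hw⟩ := Reachable.exists_walk_length_eq_dist ⟨wk⟩
  rw [← hw]
  exact grid_pot_le b w

lemma mrep_pair {V : Type*} [DecidableEq V] (G : SimpleGraph V) (u a b : V) (hab : a ≠ b) :
    mrep G u {a, b} = G.dist u a ::ₘ G.dist u b ::ₘ 0 := by
  have : ({a, b} : Finset V).val = a ::ₘ b ::ₘ 0 := by
    rw [show ({a,b} : Finset V) = insert a {b} from rfl,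
      Finset.insert_val_of_notMem (by simp [hab])]
    rfl
  simp [mrep, this]

theorem stmt_17 (s t : ℕ) (ht : 2 ≤ t) (hst : t ≤ s) :
    (∀ S : Finset (Fin s × Fin t), S.card = 2 →
        ¬ IsOMR ((pathGraph s).boxProd (pathGraph t)) S) ∧
      3 ≤ dimMS ((pathGraph s).boxProd (pathGraph t)) := by
  have hs : 2 ≤ s := le_trans ht hst
  set G := (pathGraph s).boxProd (pathGraph t) with hG
  -- a "different" element in Fin n at Nat.dist 1
  have nbr : ∀ (n : ℕ), 2 ≤ n → ∀ i : Fin n, ∃ j : Fin n, Nat.dist j.val i.val = 1 := by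
    intro n hn i
    rcases Nat.eq_zero_or_pos i.val with h | h
    · exact ⟨⟨1, hn⟩, by simp [Nat.dist, h]⟩
    · exact ⟨⟨i.val - 1, by omega⟩, by simp [Nat.dist]; omega⟩
  have main : ∀ S : Finset (Fin s × Fin t), S.card = 2 → ¬ IsOMR G S := by
    intro S hcard hOMR
    obtain ⟨a, b, hab, hS⟩ := Finset.card_eq_two.mp hcard
    subst hS
    -- find u ≠ v outside {a,b} with swapped distances
    have find : ∃ u v : Fin s × Fin t, u ≠ v ∧ u ≠ a ∧ u ≠ b ∧ v ≠ a ∧ v ≠ b ∧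
        G.dist u a = G.dist v b ∧ G.dist u b = G.dist v a := by
      by_cases h1 : a.1 = b.1
      · -- same first coordinate, a.2 ≠ b.2
        have h2 : a.2 ≠ b.2 := fun h => hab (Prod.ext h1 h)
        obtain ⟨c, hc⟩ := nbr s hs a.1
        have hc' : c ≠ a.1 := by
          intro h; rw [h] at hc; simp [Nat.dist] at hc
        refine ⟨(c, a.2), (c, b.2), ?_, ?_, ?_, ?_, ?_, ?_, ?_⟩
        · simp [Prod.ext_iff, h2]
        · simp [Prod.ext_iff, hc']
        · simp [Prod.ext_iff, h1 ▸ hc']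
        · simp [Prod.ext_iff, hc']
        · simp [Prod.ext_iff, h1 ▸ hc']
        · rw [hG, grid_dist, grid_dist]; have := congrArg Fin.val h1
          simp [Nat.dist]; omega
        · rw [hG, grid_dist, grid_dist]; have := congrArg Fin.val h1
          simp [Nat.dist]; omega
      · by_cases h2 : a.2 = b.2
        · obtain ⟨c, hc⟩ := nbr t ht a.2
          have hc' : c ≠ a.2 := by
            intro h; rw [h] at hc; simp [Nat.dist] at hc
          refine ⟨(a.1, c), (b.1, c), ?_, ?_, ?_, ?_, ?_, ?_, ?_⟩
          · simp [Prod.ext_iff, h1]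
          · simp [Prod.ext_iff, hc']
          · simp [Prod.ext_iff, h2 ▸ hc']
          · have h1' : b.1 ≠ a.1 := fun h => h1 h.symm
            simp [Prod.ext_iff, h1']
          · simp [Prod.ext_iff, h2 ▸ hc']
          · rw [hG, grid_dist, grid_dist]; have := congrArg Fin.val h2
            simp [Nat.dist]; omega
          · rw [hG, grid_dist, grid_dist]; have := congrArg Fin.val h2
            simp [Nat.dist]; omega
        · refine ⟨(a.1, b.2), (b.1, a.2), ?_, ?_, ?_, ?_, ?_, ?_, ?_⟩
          · simp [Prod.ext_iff, h1]
          · have h2' : b.2 ≠ a.2 := fun h => h2 h.symm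
            simp [Prod.ext_iff, h2']
          · simp [Prod.ext_iff, h1]
          · have h1' : b.1 ≠ a.1 := fun h => h1 h.symm
            simp [Prod.ext_iff, h1']
          · simp [Prod.ext_iff, h2]
          · rw [hG, grid_dist, grid_dist]; simp [Nat.dist]; omega
          · rw [hG, grid_dist, grid_dist]; simp [Nat.dist]; omega
    obtain ⟨u, v, huv, hua, hub, hva, hvb, e1, e2⟩ := find
    have hmem : ∀ x : Fin s × Fin t, x ≠ a → x ≠ b → x ∉ ({a, b} : Finset (Fin s × Fin t)) := by
      intro x hx1 hx2; simp [hx1, hx2]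
    have : mrep G u {a, b} = mrep G v {a, b} := by
      rw [mrep_pair G u a b hab, mrep_pair G v a b hab, e1, e2, Multiset.cons_swap]
    exact huv (hOMR u (hmem u hua hub) v (hmem v hva hvb) this)
  refine ⟨main, ?_⟩
  have hne : {n | ∃ S : Finset (Fin s × Fin t), S.card = n ∧ IsOMR G S}.Nonempty := by
    refine ⟨(Finset.univ : Finset (Fin s × Fin t)).card, Finset.univ, rfl, ?_⟩
    intro u hu; exact absurd (Finset.mem_univ u) hu
  have key : ∀ n ∈ {n | ∃ S : Finset (Fin s × Fin t), S.card = n ∧ IsOMR G S}, 3 ≤ n := by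
    rintro n ⟨S, hcard, hOMR⟩
    by_contra hlt
    push_neg at hlt
    interval_cases n
    · -- card 0
      rw [Finset.card_eq_zero] at hcard
      subst hcard
      have h01 : ((⟨0, by omega⟩ : Fin s), (⟨0, by omega⟩ : Fin t)) ≠
          ((⟨0, by omega⟩ : Fin s), (⟨1, by omega⟩ : Fin t)) := by
        simp [Prod.ext_iff, Fin.ext_iff]
      exact h01 (hOMR _ (by simp) _ (by simp) (by simp [mrep]))
    · -- card 1
      obtain ⟨a, hS⟩ := Finset.card_eq_one.mp hcard
      subst hS
      obtain ⟨c1, hc1⟩ := nbr s hs a.1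
      obtain ⟨c2, hc2⟩ := nbr t ht a.2
      have hc1' : c1 ≠ a.1 := by intro h; rw [h] at hc1; simp [Nat.dist] at hc1
      have hc2' : c2 ≠ a.2 := by intro h; rw [h] at hc2; simp [Nat.dist] at hc2
      have huv : ((c1, a.2) : Fin s × Fin t) ≠ (a.1, c2) := by
        simp [Prod.ext_iff]; intro h; exact absurd h hc1'
      refine huv (hOMR _ (by simp [Prod.ext_iff, hc1']) _ (by simp [Prod.ext_iff, hc2']) ?_)
      have d1 : G.dist (c1, a.2) a = 1 := by
        rw [hG, grid_dist]; simpa [Nat.dist] using hc1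
      have d2 : G.dist (a.1, c2) a = 1 := by
        rw [hG, grid_dist]; simpa [Nat.dist] using hc2
      simp [mrep, d1, d2]
    · exact main S hcard hOMR
  exact key _ (Nat.sInf_mem hne)
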